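/- Let X = {(x, y, z, w) : ℂ × ℂ × ℂ × ℂ | x * y = z * w} be the affine quadric cone, with the ℂˣ-action t • (x, y, z, w) = (t * x, t⁻¹ * y, z, w) on ℂ⁴. Then a point p = (x, y, z, w) ∈ X has a limit of t • p along the filter 't → ∞' on ℂˣ (the filter Filter.comap Units.val (Bornology.cobounded ℂ)) if and only if x = 0; consequently the repelling set X⁻ ∩ X = {(0, y, z, w) | z * w = 0}, a union of two planes, and for such p the limit equals (0, 0, z, w). -/

import Mathlib

open Topology Filter

/-- The `ℂˣ`-action `t • (x, y, z, w) = (t x, t⁻¹ y, z, w)` on `ℂ⁴`. -/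
def quadricAct (t : ℂˣ) (p : ℂ × ℂ × ℂ × ℂ) : ℂ × ℂ × ℂ × ℂ :=
  ((t : ℂ) * p.1, ((t⁻¹ : ℂˣ) : ℂ) * p.2.1, p.2.2.1, p.2.2.2)

open Bornology

instance : (comap (Units.val : ℂˣ → ℂ) (cobounded ℂ)).NeBot := by
  rw [Filter.comap_neBot_iff]
  intro t ht
  have hb : IsBounded tᶜ := Bornology.IsCobounded.compl ht
  obtain ⟨r, hr⟩ := (isBounded_iff_forall_norm_le).1 hb
  set c : ℝ := max r 0 + 1 with hcdef
  have hc : (0:ℝ) < c := by positivity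
  refine ⟨Units.mk0 (c : ℂ) (by exact_mod_cast hc.ne'), ?_⟩
  by_contra h
  have h2 := hr _ h
  simp only [Units.val_mk0, Complex.norm_real, Real.norm_eq_abs, abs_of_pos hc, hcdef] at h2
  have : r ≤ max r 0 := le_max_left _ _
  linarith [le_abs_self (max r 0 + 1)]

lemma inv_tendsto : Tendsto (fun t : ℂˣ => ((t⁻¹ : ℂˣ) : ℂ))
    (comap Units.val (cobounded ℂ)) (𝓝 0) := by
  have : (fun t : ℂˣ => ((t⁻¹ : ℂˣ) : ℂ)) = (fun z : ℂ => z⁻¹) ∘ (Units.val : ℂˣ → ℂ) := by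
    ext t; simp
  rw [this]
  exact tendsto_inv₀_cobounded.comp tendsto_comap

lemma no_limit {x : ℂ} (hx : x ≠ 0) {a : ℂ}
    (h1 : Tendsto (fun t : ℂˣ => (t : ℂ) * x) (comap Units.val (cobounded ℂ)) (𝓝 a)) : False := by
  have h2 : Tendsto (fun t : ℂˣ => ‖(t : ℂ) * x‖) (comap Units.val (cobounded ℂ)) atTop := by
    simp only [norm_mul]
    exact (tendsto_norm_cobounded_atTop.comp tendsto_comap).atTop_mul_const (norm_pos_iff.2 hx)
  exact not_tendsto_atTop_of_tendsto_nhds h1.norm h2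

lemma lim_of_eq_zero (p : ℂ × ℂ × ℂ × ℂ) (hx : p.1 = 0) :
    Filter.Tendsto (fun t : ℂˣ => quadricAct t p)
      (Filter.comap Units.val (Bornology.cobounded ℂ)) (𝓝 (0, 0, p.2.2.1, p.2.2.2)) := by
  unfold quadricAct
  rw [hx]
  have h1 : Tendsto (fun t : ℂˣ => (t : ℂ) * (0:ℂ))
      (comap Units.val (cobounded ℂ)) (𝓝 (0:ℂ)) := by
    simp only [mul_zero]; exact tendsto_const_nhds
  have h2 : Tendsto (fun t : ℂˣ => ((t⁻¹ : ℂˣ) : ℂ) * p.2.1)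
      (comap Units.val (cobounded ℂ)) (𝓝 (0:ℂ)) := by
    simpa using inv_tendsto.mul_const p.2.1
  exact h1.prodMk_nhds (h2.prodMk_nhds
    (tendsto_const_nhds.prodMk_nhds tendsto_const_nhds))

/-- For the quadric cone `X = {xy = zw}` with the action `t • (x,y,z,w) = (tx, t⁻¹y, z, w)`,
a point `p ∈ X` has a limit as `t → ∞` iff `x = 0`, the limit being `(0, 0, z, w)`; the
repelling set `X⁻ ∩ X` is the union of two planes `{(0, y, z, w) | zw = 0}`. -/
theorem quadric_cone_repelling_set :
    (∀ p : ℂ × ℂ × ℂ × ℂ, p.1 * p.2.1 = p.2.2.1 * p.2.2.2 →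
      (((∃ l : ℂ × ℂ × ℂ × ℂ, Filter.Tendsto (fun t : ℂˣ => quadricAct t p)
          (Filter.comap Units.val (Bornology.cobounded ℂ)) (𝓝 l)) ↔ p.1 = 0) ∧
        (p.1 = 0 → Filter.Tendsto (fun t : ℂˣ => quadricAct t p)
          (Filter.comap Units.val (Bornology.cobounded ℂ))
          (𝓝 (0, 0, p.2.2.1, p.2.2.2))))) ∧
    {p : ℂ × ℂ × ℂ × ℂ | p.1 * p.2.1 = p.2.2.1 * p.2.2.2 ∧
        ∃ l : ℂ × ℂ × ℂ × ℂ, Filter.Tendsto (fun t : ℂˣ => quadricAct t p)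
          (Filter.comap Units.val (Bornology.cobounded ℂ)) (𝓝 l)} =
      {q : ℂ × ℂ × ℂ × ℂ | ∃ y z w : ℂ, z * w = 0 ∧ q = (0, y, z, w)} := by
  have key : ∀ p : ℂ × ℂ × ℂ × ℂ,
      ((∃ l : ℂ × ℂ × ℂ × ℂ, Filter.Tendsto (fun t : ℂˣ => quadricAct t p)
        (Filter.comap Units.val (Bornology.cobounded ℂ)) (𝓝 l)) ↔ p.1 = 0) := by
    intro p
    constructor
    · rintro ⟨l, hl⟩
      by_contra hx
      exact no_limit hx ((continuous_fst.tendsto l).comp hl)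
    · intro hx
      exact ⟨_, lim_of_eq_zero p hx⟩
  refine ⟨fun p _ => ⟨key p, lim_of_eq_zero p⟩, ?_⟩
  ext q
  simp only [Set.mem_setOf_eq]
  constructor
  · rintro ⟨hq, hl⟩
    have hx : q.1 = 0 := (key q).1 hl
    refine ⟨q.2.1, q.2.2.1, q.2.2.2, ?_, ?_⟩
    · rw [← hq, hx, zero_mul]
    · rw [Prod.ext_iff, Prod.ext_iff, Prod.ext_iff]
      exact ⟨hx, rfl, rfl, rfl⟩
  · rintro ⟨y, z, w, hzw, rfl⟩
    exact ⟨by simpa using hzw.symm, _, lim_of_eq_zero _ rfl⟩
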